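/- Let G ∈ ℝ^{2c×2c} be symmetric positive definite, let H ∈ ℝ^{2c×2c} be symmetric of signature (c,c), and let D be the diagonal matrix with c diagonal entries equal to 1 followed by c entries equal to −1. Then there exists a matrix B ∈ ℝ^{2c×2c} with G = BᵀB and H = BᵀDB if and only if (G H^{−1})² = I. -/

import Mathlib

open Matrix

/-- The diagonal matrix with `c` entries `1` followed by `c` entries `-1`. -/
def Dmat (c : ℕ) : Matrix (Fin (2 * c)) (Fin (2 * c)) ℝ :=
  Matrix.diagonal (fun i => if (i : ℕ) < c then 1 else -1)

/-- Sylvester-type inequality: if `diagonal ε` is congruent (via any matrix) to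
`diagonal d`, the number of `+1`s of `ε` is at most that of `d`. -/
lemma card_le_of_diag_congr {m : Type*} [Fintype m] [DecidableEq m]
    (ε d : m → ℝ) (N : Matrix m m ℝ)
    (h : Matrix.diagonal ε = Nᵀ * Matrix.diagonal d * N)
    (hε : ∀ i, ε i = 1 ∨ ε i ≤ 0) (hd : ∀ j, d j = 1 ∨ d j ≤ 0) :
    Fintype.card {i // ε i = 1} ≤ Fintype.card {j // d j = 1} := by
  classical
  let extL : ({i // ε i = 1} → ℝ) →ₗ[ℝ] (m → ℝ) :=
    { toFun := fun y i => if h : ε i = 1 then y ⟨i, h⟩ else 0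
      map_add' := by intro y z; funext i; by_cases h : ε i = 1 <;> simp [h]
      map_smul' := by intro r y; funext i; by_cases h : ε i = 1 <;> simp [h] }
  let T : ({i // ε i = 1} → ℝ) →ₗ[ℝ] ({j // d j = 1} → ℝ) :=
    (LinearMap.funLeft ℝ ℝ Subtype.val) ∘ₗ N.mulVecLin ∘ₗ extL
  have hT : Function.Injective T := by
    rw [← LinearMap.ker_eq_bot, LinearMap.ker_eq_bot']
    intro y hy
    set x : m → ℝ := extL y with hxdef
    have hxi : ∀ i, x i = if h : ε i = 1 then y ⟨i, h⟩ else 0 := fun i => rfl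
    have hw : ∀ j : m, d j = 1 → (N *ᵥ x) j = 0 := by
      intro j hj
      have := congrFun hy (⟨j, hj⟩ : {j // d j = 1})
      simpa [T, LinearMap.funLeft] using this
    have key : x ⬝ᵥ (Matrix.diagonal ε *ᵥ x)
        = (N *ᵥ x) ⬝ᵥ (Matrix.diagonal d *ᵥ (N *ᵥ x)) := by
      rw [h, ← Matrix.mulVec_mulVec, ← Matrix.mulVec_mulVec,
        Matrix.dotProduct_mulVec, Matrix.vecMul_transpose]
    have lhs_eq : x ⬝ᵥ (Matrix.diagonal ε *ᵥ x) = ∑ i, x i * x i := by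
      simp only [dotProduct, Matrix.mulVec_diagonal]
      refine Finset.sum_congr rfl fun i _ => ?_
      by_cases hi : ε i = 1
      · rw [hi, one_mul]
      · have : x i = 0 := by rw [hxi i, dif_neg hi]
        simp [this]
    have rhs_le : (N *ᵥ x) ⬝ᵥ (Matrix.diagonal d *ᵥ (N *ᵥ x)) ≤ 0 := by
      simp only [dotProduct, Matrix.mulVec_diagonal]
      apply Finset.sum_nonpos
      intro j _
      rcases hd j with hj | hj
      · rw [hw j hj]; simp
      · nlinarith [mul_self_nonneg ((N *ᵥ x) j)]
    have hsum : ∑ i, x i * x i = 0 :=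
      le_antisymm (by rw [← lhs_eq, key]; exact rhs_le)
        (Finset.sum_nonneg fun i _ => mul_self_nonneg _)
    have hx0 : ∀ i, x i = 0 := by
      intro i
      exact mul_self_eq_zero.mp
        ((Finset.sum_eq_zero_iff_of_nonneg (fun i _ => mul_self_nonneg (x i))).mp hsum i
          (Finset.mem_univ i))
    funext j
    have := hx0 j.1
    rw [hxi j.1, dif_pos j.2] at this
    simpa using this
  calc Fintype.card {i // ε i = 1}
      = Module.finrank ℝ ({i // ε i = 1} → ℝ) :=
        (Module.finrank_fintype_fun_eq_card ℝ).symm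
    _ ≤ Module.finrank ℝ ({j // d j = 1} → ℝ) :=
        LinearMap.finrank_le_finrank_of_injective hT
    _ = Fintype.card {j // d j = 1} := Module.finrank_fintype_fun_eq_card ℝ

lemma card_fin_lt (c : ℕ) : Fintype.card {j : Fin (2 * c) // (j : ℕ) < c} = c := by
  have e : {j : Fin (2 * c) // (j : ℕ) < c} ≃ Fin c :=
    { toFun := fun x => ⟨x.1, x.2⟩
      invFun := fun k => ⟨⟨k.1, by omega⟩, k.2⟩
      left_inv := fun x => by ext; rfl
      right_inv := fun k => rfl }
  rw [Fintype.card_congr e, Fintype.card_fin]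

lemma card_eigen_eq (c : ℕ) (ε : Fin (2 * c) → ℝ) (N : Matrix (Fin (2 * c)) (Fin (2 * c)) ℝ)
    (hε : ∀ i, ε i = 1 ∨ ε i = -1)
    (h : Matrix.diagonal ε = Nᵀ * Dmat c * N) :
    Fintype.card {i // ε i = 1} = c := by
  classical
  set d : Fin (2 * c) → ℝ := fun j => if (j : ℕ) < c then 1 else -1 with hd
  have hdm : Dmat c = Matrix.diagonal d := rfl
  have hd1 : Fintype.card {j // d j = 1} = c := by
    rw [Fintype.card_congr (Equiv.subtypeEquivRight (q := fun j : Fin (2*c) => (j:ℕ) < c) ?_)]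
    · exact card_fin_lt c
    · intro j
      by_cases hj : (j : ℕ) < c <;> simp [hd, hj] <;> norm_num
  have le1 : Fintype.card {i // ε i = 1} ≤ c := by
    refine le_of_le_of_eq (card_le_of_diag_congr ε d N (by rw [← hdm]; exact h) ?_ ?_) hd1
    · intro i; rcases hε i with h1 | h1
      · exact Or.inl h1
      · right; rw [h1]; norm_num
    · intro j; by_cases hj : (j : ℕ) < c
      · left; simp [hd, hj]
      · right; simp [hd, hj]
  have le2 : Fintype.card {i // ε i = -1} ≤ c := by
    have h' : Matrix.diagonal (fun i => -ε i) = Nᵀ * Matrix.diagonal (fun j => -d j) * N := by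
      have h2 : Matrix.diagonal (fun i => -ε i) = -(Matrix.diagonal ε) := by
        rw [← Matrix.diagonal_neg]
      have h3 : Matrix.diagonal (fun j => -d j) = -(Matrix.diagonal d) := by
        rw [← Matrix.diagonal_neg]
      rw [h2, h, hdm, h3, Matrix.mul_neg, Matrix.neg_mul]
    have key := card_le_of_diag_congr (fun i => -ε i) (fun j => -d j) N h'
      (fun i => by show -ε i = 1 ∨ -ε i ≤ 0
                   rcases hε i with h1 | h1 <;> rw [h1] <;> norm_num)
      (fun j => by show -d j = 1 ∨ -d j ≤ 0
                   by_cases hj : (j : ℕ) < c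
                   · right; simp [hd, hj]
                   · left; simp [hd, hj])
    have e1 : Fintype.card {i // -ε i = 1} = Fintype.card {i // ε i = -1} :=
      Fintype.card_congr (Equiv.subtypeEquivRight (fun i => by constructor <;> intro h <;> linarith))
    have e2 : Fintype.card {j // -d j = 1} = c := by
      rw [Fintype.card_congr (Equiv.subtypeEquivRight (q := fun j : Fin (2*c) => ¬ (j:ℕ) < c)
        (fun j => by by_cases hj : (j:ℕ) < c <;> norm_num [hd, hj]))]
      rw [Fintype.card_subtype_compl, card_fin_lt c, Fintype.card_fin]
      omega
    rw [e1, e2] at key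
    exact key
  have hcompl : Fintype.card {i // ε i = -1} = 2 * c - Fintype.card {i // ε i = 1} := by
    have e3 : Fintype.card {i // ε i = -1} = Fintype.card {i // ¬ ε i = 1} :=
      Fintype.card_congr (Equiv.subtypeEquivRight (fun i => by
        rcases hε i with h1 | h1 <;> rw [h1] <;> norm_num))
    rw [e3, Fintype.card_subtype_compl, Fintype.card_fin]
  have hle : Fintype.card {i // ε i = 1} ≤ 2 * c := by
    calc Fintype.card {i // ε i = 1} ≤ Fintype.card (Fin (2*c)) := Fintype.card_subtype_le _
      _ = 2 * c := Fintype.card_fin _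
  omega

lemma Dmat_mul_self (c : ℕ) : Dmat c * Dmat c = 1 := by
  ext i j
  rw [Dmat, Matrix.diagonal_mul_diagonal]
  by_cases hij : i = j
  · subst hij
    by_cases h : (i : ℕ) < c <;> simp [h, Matrix.one_apply_eq]
  · simp [Matrix.diagonal_apply_ne _ hij, Matrix.one_apply_ne hij]

lemma Dmat_transpose (c : ℕ) : (Dmat c)ᵀ = Dmat c := Matrix.diagonal_transpose _

lemma isUnit_Dmat (c : ℕ) : IsUnit (Dmat c) := ⟨⟨Dmat c, Dmat c, Dmat_mul_self c, Dmat_mul_self c⟩, rfl⟩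

theorem stmt8 (c : ℕ) (G H : Matrix (Fin (2 * c)) (Fin (2 * c)) ℝ)
    (hG : G.PosDef) (hGsymm : G.IsSymm) (hHsymm : H.IsSymm)
    (hsig : ∃ Y : Matrix (Fin (2 * c)) (Fin (2 * c)) ℝ, IsUnit Y ∧ H = Yᵀ * Dmat c * Y) :
    (∃ B : Matrix (Fin (2 * c)) (Fin (2 * c)) ℝ, G = Bᵀ * B ∧ H = Bᵀ * Dmat c * B) ↔
      (G * H⁻¹) * (G * H⁻¹) = 1 := by
  obtain ⟨Y, hY, hH⟩ := hsig
  have hHdet : IsUnit H.det := by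
    rw [hH, Matrix.det_mul, Matrix.det_mul, Matrix.det_transpose]
    exact (((Matrix.isUnit_iff_isUnit_det Y).mp hY).mul
      ((Matrix.isUnit_iff_isUnit_det _).mp (isUnit_Dmat c))).mul
        ((Matrix.isUnit_iff_isUnit_det Y).mp hY)
  have hDinv : (Dmat c)⁻¹ = Dmat c := Matrix.inv_eq_right_inv (Dmat_mul_self c)
  constructor
  · rintro ⟨B, hB1, hB2⟩
    have hBdet : IsUnit B.det := by
      have h1 : IsUnit (Bᵀ.det * (Dmat c).det * B.det) := by
        rw [← Matrix.det_mul, ← Matrix.det_mul, ← hB2]; exact hHdet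
      exact isUnit_of_mul_isUnit_right h1
    have hBtdet : IsUnit Bᵀ.det := by rwa [Matrix.det_transpose]
    have hBBi : B * B⁻¹ = 1 := Matrix.mul_nonsing_inv _ hBdet
    have hBtiBt : (Bᵀ)⁻¹ * Bᵀ = 1 := Matrix.nonsing_inv_mul _ hBtdet
    have e1 : G * H⁻¹ = Bᵀ * Dmat c * (Bᵀ)⁻¹ := by
      rw [hB1, hB2, Matrix.mul_inv_rev, Matrix.mul_inv_rev, hDinv]
      rw [Matrix.mul_assoc (Bᵀ) B _, ← Matrix.mul_assoc B (B⁻¹) _, hBBi, Matrix.one_mul,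
        ← Matrix.mul_assoc]
    rw [e1, Matrix.mul_assoc (Bᵀ * Dmat c) _ _]
    have e2 : (Bᵀ)⁻¹ * (Bᵀ * Dmat c * (Bᵀ)⁻¹) = Dmat c * (Bᵀ)⁻¹ := by
      rw [← Matrix.mul_assoc, ← Matrix.mul_assoc, hBtiBt, Matrix.one_mul]
    rw [e2, ← Matrix.mul_assoc, Matrix.mul_assoc Bᵀ, Dmat_mul_self, Matrix.mul_one]
    exact Matrix.mul_nonsing_inv _ hBtdet
  · intro hyp
    classical
    have hGdet : IsUnit G.det := isUnit_iff_ne_zero.mpr hG.det_pos.ne'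
    have hGiG : G⁻¹ * G = 1 := Matrix.nonsing_inv_mul _ hGdet
    have hHHi : H * H⁻¹ = 1 := Matrix.mul_nonsing_inv _ hHdet
    have hHiH : H⁻¹ * H = 1 := Matrix.nonsing_inv_mul _ hHdet
    -- square root of G
    obtain ⟨X, hXdef⟩ : ∃ X, X = (open MatrixOrder in CFC.sqrt G) := ⟨_, rfl⟩
    have hXX : X * X = G := by rw [hXdef]; open MatrixOrder in exact CFC.sqrt_mul_sqrt_self G hG.posSemidef.nonneg
    have hXsymm : Xᵀ = X := by
      have h1 : Xᴴ = X := by rw [hXdef]; open MatrixOrder in exact (CFC.sqrt_nonneg G).posSemidef.1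
      rwa [Matrix.conjTranspose_eq_transpose_of_trivial] at h1
    have hXdet : IsUnit X.det := by
      have h1 : X.det * X.det = G.det := by rw [← Matrix.det_mul, hXX]
      exact isUnit_of_mul_isUnit_left (h1 ▸ hGdet)
    obtain ⟨Xi, hXidef⟩ : ∃ Xi, Xi = X⁻¹ := ⟨_, rfl⟩
    have hXXi : X * Xi = 1 := by rw [hXidef]; exact Matrix.mul_nonsing_inv _ hXdet
    have hXiX : Xi * X = 1 := by rw [hXidef]; exact Matrix.nonsing_inv_mul _ hXdet
    have hXit : Xiᵀ = Xi := by rw [hXidef, Matrix.transpose_nonsing_inv, hXsymm]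
    -- H * G⁻¹ * H = G
    have hGHG : G * H⁻¹ * G = H := by
      have e : G * H⁻¹ * (G * H⁻¹) * H = H := by rw [hyp, Matrix.one_mul]
      rwa [Matrix.mul_assoc (G * H⁻¹) (G * H⁻¹) H, Matrix.mul_assoc G H⁻¹ H, hHiH,
        Matrix.mul_one] at e
    have hHGH : H * G⁻¹ * H = G := by
      have e : H * G⁻¹ * H = H * G⁻¹ * (G * H⁻¹ * G) := by rw [hGHG]
      rw [e, Matrix.mul_assoc G H⁻¹ G, ← Matrix.mul_assoc (H * G⁻¹) G (H⁻¹ * G),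
        Matrix.mul_assoc H G⁻¹ G, hGiG, Matrix.mul_one, ← Matrix.mul_assoc, hHHi,
        Matrix.one_mul]
    -- the symmetric involution K
    have hHt : Hᵀ = H := hHsymm
    obtain ⟨K, hKdef⟩ : ∃ K, K = Xi * H * Xi := ⟨_, rfl⟩
    have hKsymm : Kᵀ = K := by
      rw [hKdef, Matrix.transpose_mul, Matrix.transpose_mul, hXit, hHt, ← Matrix.mul_assoc]
    have hKherm : K.IsHermitian := by
      show Kᴴ = K
      rw [Matrix.conjTranspose_eq_transpose_of_trivial, hKsymm]
    have hGinv : G⁻¹ = Xi * Xi := by rw [← hXX, Matrix.mul_inv_rev, hXidef]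
    have hKK : K * K = 1 := by
      have e1 : K * K = Xi * (H * (Xi * (Xi * (H * Xi)))) := by
        rw [hKdef]; simp only [Matrix.mul_assoc]
      have e2 : Xi * (Xi * (H * Xi)) = G⁻¹ * (H * Xi) := by rw [hGinv, Matrix.mul_assoc]
      have e3 : H * (G⁻¹ * (H * Xi)) = G * Xi := by
        calc H * (G⁻¹ * (H * Xi)) = (H * G⁻¹ * H) * Xi := by simp only [Matrix.mul_assoc]
          _ = G * Xi := by rw [hHGH]
      rw [e1, e2, e3, ← hXX, Matrix.mul_assoc X X Xi, ← Matrix.mul_assoc Xi X (X * Xi),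
        hXiX, Matrix.one_mul, hXXi]
    have hKcong : K = (Y * Xi)ᵀ * Dmat c * (Y * Xi) := by
      rw [hKdef, hH, Matrix.transpose_mul, hXit]
      simp only [Matrix.mul_assoc]
    -- spectral decomposition of K
    obtain ⟨U, hUdef⟩ : ∃ U : Matrix (Fin (2 * c)) (Fin (2 * c)) ℝ,
        U = (Matrix.IsHermitian.eigenvectorUnitary hKherm :
          Matrix (Fin (2 * c)) (Fin (2 * c)) ℝ) := ⟨_, rfl⟩
    have hUst : star U = Uᵀ := by
      rw [Matrix.star_eq_conjTranspose, Matrix.conjTranspose_eq_transpose_of_trivial]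
    have hUUt : U * Uᵀ = 1 := by
      rw [← hUst, hUdef]
      exact (Matrix.mem_unitaryGroup_iff).mp (Matrix.IsHermitian.eigenvectorUnitary hKherm).2
    have hUtU : Uᵀ * U = 1 := by
      rw [← hUst, hUdef]
      exact (Matrix.mem_unitaryGroup_iff').mp (Matrix.IsHermitian.eigenvectorUnitary hKherm).2
    set ε : Fin (2 * c) → ℝ := hKherm.eigenvalues with hεdef
    have hofReal : (RCLike.ofReal ∘ ε : Fin (2 * c) → ℝ) = ε := by
      funext i; simp [RCLike.ofReal_real_eq_id]
    have hdiagK : Uᵀ * K * U = Matrix.diagonal ε := by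
      have h1 := Matrix.IsHermitian.conjStarAlgAut_star_eigenvectorUnitary hKherm
      simp only [Unitary.conjStarAlgAut_apply, Unitary.coe_star, star_star] at h1
      rw [← hUdef, hUst] at h1
      rw [h1, hofReal]
    have hspec : K = U * Matrix.diagonal ε * Uᵀ := by
      have h1 := Matrix.IsHermitian.spectral_theorem hKherm
      simp only [Unitary.conjStarAlgAut_apply, Unitary.coe_star] at h1
      rw [← hUdef, hUst] at h1
      rw [← hofReal]
      exact h1
    have cUUt : ∀ M : Matrix (Fin (2 * c)) (Fin (2 * c)) ℝ, U * (Uᵀ * M) = M := fun M => by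
      rw [← Matrix.mul_assoc, hUUt, Matrix.one_mul]
    have hεpm : ∀ i, ε i = 1 ∨ ε i = -1 := by
      have h1 : Matrix.diagonal ε * Matrix.diagonal ε = 1 := by
        calc Matrix.diagonal ε * Matrix.diagonal ε
            = (Uᵀ * K * U) * (Uᵀ * K * U) := by rw [hdiagK]
          _ = Uᵀ * (K * (U * (Uᵀ * (K * U)))) := by simp only [Matrix.mul_assoc]
          _ = Uᵀ * (K * (K * U)) := by rw [cUUt]
          _ = Uᵀ * ((K * K) * U) := by rw [Matrix.mul_assoc]
          _ = Uᵀ * U := by rw [hKK, Matrix.one_mul]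
          _ = 1 := hUtU
      intro i
      have h2 : (Matrix.diagonal ε * Matrix.diagonal ε) i i
          = (1 : Matrix (Fin (2 * c)) (Fin (2 * c)) ℝ) i i := by rw [h1]
      rw [Matrix.diagonal_mul_diagonal, Matrix.diagonal_apply_eq, Matrix.one_apply_eq] at h2
      exact mul_self_eq_one_iff.mp h2
    -- the count of +1 eigenvalues is c
    have hdiagcong : Matrix.diagonal ε = (Y * Xi * U)ᵀ * Dmat c * (Y * Xi * U) := by
      rw [← hdiagK, hKcong]
      simp only [Matrix.transpose_mul, Matrix.mul_assoc]
    have hcard : Fintype.card {i // ε i = 1} = c := card_eigen_eq c ε (Y * Xi * U) hεpm hdiagcong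
    have hcard' : Fintype.card {i // ¬ ε i = 1} = c := by
      rw [Fintype.card_subtype_compl, hcard, Fintype.card_fin]; omega
    -- the sorting permutation
    let e₁ : {i // ε i = 1} ≃ Fin c := Fintype.equivFinOfCardEq hcard
    let e₂ : {i // ¬ ε i = 1} ≃ Fin c := Fintype.equivFinOfCardEq hcard'
    let σ : Fin (2 * c) ≃ Fin (2 * c) :=
      (Equiv.sumCompl (fun i => ε i = 1)).symm.trans
        ((e₁.sumCongr e₂).trans (finSumFinEquiv.trans (finCongr (by omega))))
    have hσ : ∀ i, (if ((σ i : Fin (2 * c)) : ℕ) < c then (1 : ℝ) else -1) = ε i := by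
      intro i
      by_cases hi : ε i = 1
      · have h0 : (Equiv.sumCompl (fun i => ε i = 1)).symm i = Sum.inl ⟨i, hi⟩ :=
          Equiv.sumCompl_symm_apply_of_pos (p := fun j => ε j = 1) (a := i) hi
        have h1 : σ i = finCongr (by omega : c + c = 2 * c) (finSumFinEquiv
            (Sum.inl (e₁ ⟨i, hi⟩))) := by
          simp only [σ, Equiv.trans_apply, h0, Equiv.sumCongr_apply, Sum.map_inl]
        have h2 : ((σ i : Fin (2 * c)) : ℕ) = ((e₁ ⟨i, hi⟩ : Fin c) : ℕ) := by
          rw [h1]; simp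
        have h3 : ((σ i : Fin (2 * c)) : ℕ) < c := by
          rw [h2]; exact (e₁ ⟨i, hi⟩).2
        rw [if_pos h3, hi]
      · have h0 : (Equiv.sumCompl (fun i => ε i = 1)).symm i = Sum.inr ⟨i, hi⟩ :=
          Equiv.sumCompl_symm_apply_of_neg (p := fun j => ε j = 1) (a := i) hi
        have h1 : σ i = finCongr (by omega : c + c = 2 * c) (finSumFinEquiv
            (Sum.inr (e₂ ⟨i, hi⟩))) := by
          simp only [σ, Equiv.trans_apply, h0, Equiv.sumCongr_apply, Sum.map_inr]
        have h2 : ((σ i : Fin (2 * c)) : ℕ) = c + ((e₂ ⟨i, hi⟩ : Fin c) : ℕ) := by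
          rw [h1]; simp; omega
        have h3 : ¬ ((σ i : Fin (2 * c)) : ℕ) < c := by omega
        rw [if_neg h3]
        rcases hεpm i with h4 | h4
        · exact absurd h4 hi
        · exact h4.symm
    have hsub : Matrix.diagonal ε = (Dmat c).submatrix σ σ := by
      have hcomp : ((fun j : Fin (2 * c) => if (j : ℕ) < c then (1 : ℝ) else -1) ∘ σ) = ε := by
        funext i; exact hσ i
      rw [Dmat, Matrix.submatrix_diagonal_equiv, hcomp]
    -- the permutation matrix
    obtain ⟨P, hPdef⟩ : ∃ P : Matrix (Fin (2 * c)) (Fin (2 * c)) ℝ, P = σ.toPEquiv.toMatrix := ⟨_, rfl⟩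
    have hPt : Pᵀ = σ.symm.toPEquiv.toMatrix := by
      rw [hPdef, Equiv.toPEquiv_symm, PEquiv.toMatrix_symm]
    have hPDPt : P * Dmat c * Pᵀ = (Dmat c).submatrix σ σ := by
      rw [hPt, hPdef, PEquiv.toMatrix_toPEquiv_mul, PEquiv.mul_toMatrix_toPEquiv,
        Matrix.submatrix_submatrix]
      simp
    have hPPt : P * Pᵀ = 1 := by
      rw [hPt, hPdef, ← PEquiv.toMatrix_trans, ← Equiv.toPEquiv_trans, Equiv.self_trans_symm,
        Equiv.toPEquiv_refl, PEquiv.toMatrix_refl]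
    -- assemble B
    obtain ⟨W, hWdef⟩ : ∃ W, W = U * P := ⟨_, rfl⟩
    have hWDW : W * Dmat c * Wᵀ = K := by
      calc W * Dmat c * Wᵀ = U * (P * Dmat c * Pᵀ) * Uᵀ := by
            rw [hWdef, Matrix.transpose_mul]; simp only [Matrix.mul_assoc]
        _ = U * Matrix.diagonal ε * Uᵀ := by rw [hPDPt, ← hsub]
        _ = K := hspec.symm
    have hWWt : W * Wᵀ = 1 := by
      calc W * Wᵀ = U * (P * Pᵀ) * Uᵀ := by
            rw [hWdef, Matrix.transpose_mul]; simp only [Matrix.mul_assoc]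
        _ = 1 := by rw [hPPt, Matrix.mul_one, hUUt]
    refine ⟨Wᵀ * X, ?_, ?_⟩
    · rw [Matrix.transpose_mul, Matrix.transpose_transpose, hXsymm]
      have e : X * W * (Wᵀ * X) = X * X := by
        calc X * W * (Wᵀ * X) = X * (W * Wᵀ) * X := by simp only [Matrix.mul_assoc]
          _ = X * X := by rw [hWWt, Matrix.mul_one]
      rw [e, hXX]
    · rw [Matrix.transpose_mul, Matrix.transpose_transpose, hXsymm]
      have e : X * W * Dmat c * (Wᵀ * X) = X * K * X := by
        calc X * W * Dmat c * (Wᵀ * X) = X * (W * Dmat c * Wᵀ) * X := by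
              simp only [Matrix.mul_assoc]
          _ = X * K * X := by rw [hWDW]
      have e2 : X * (Xi * H * Xi) * X = H := by
        calc X * (Xi * H * Xi) * X = (X * Xi) * (H * (Xi * X)) := by
              simp only [Matrix.mul_assoc]
          _ = H := by rw [hXXi, hXiX, Matrix.one_mul, Matrix.mul_one]
      rw [e, hKdef, e2]
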